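/- Let G be a connected simple graph on V₁ with n₁ vertices having constant curvature K₁ > 0, and let H be a connected simple graph on V₂ with n₂ vertices having constant curvature K₂ > 0. Then the Cartesian (box) product G □ H has constant curvature K where 1/K = 1/K₁ + 1/K₂; that is, the constant vector with value K₁K₂/(K₁+K₂) is a curvature vector for G □ H. -/

import Mathlib

open SimpleGraph

lemma boxProd_walk_lower {V₁ V₂ : Type*} {G : SimpleGraph V₁} {H : SimpleGraph V₂}
    (hG : G.Connected) (hH : H.Connected) :
    ∀ {p q : V₁ × V₂} (w : (G.boxProd H).Walk p q),
      G.dist p.1 q.1 + H.dist p.2 q.2 ≤ w.length := by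
  intro p q w
  induction w with
  | nil => simp
  | @cons a b c hadj w ih =>
    rw [SimpleGraph.Walk.length_cons]
    rcases SimpleGraph.boxProd_adj.mp hadj with ⟨h1, h2⟩ | ⟨h1, h2⟩
    · calc G.dist a.1 c.1 + H.dist a.2 c.2
          ≤ (G.dist a.1 b.1 + G.dist b.1 c.1) + H.dist a.2 c.2 := by
            exact Nat.add_le_add_right (hG.dist_triangle) _
        _ ≤ (1 + G.dist b.1 c.1) + H.dist a.2 c.2 := by
            exact Nat.add_le_add_right (Nat.add_le_add_right
              (by simpa using SimpleGraph.dist_le h1.toWalk) _) _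
        _ = (G.dist b.1 c.1 + H.dist b.2 c.2) + 1 := by rw [h2]; ring
        _ ≤ w.length + 1 := Nat.add_le_add_right ih 1
    · calc G.dist a.1 c.1 + H.dist a.2 c.2
          ≤ G.dist a.1 c.1 + (H.dist a.2 b.2 + H.dist b.2 c.2) := by
            exact Nat.add_le_add_left (hH.dist_triangle) _
        _ ≤ G.dist a.1 c.1 + (1 + H.dist b.2 c.2) := by
            exact Nat.add_le_add_left (Nat.add_le_add_right
              (by simpa using SimpleGraph.dist_le h1.toWalk) _) _
        _ = (G.dist b.1 c.1 + H.dist b.2 c.2) + 1 := by rw [h2]; ring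
        _ ≤ w.length + 1 := Nat.add_le_add_right ih 1

lemma boxProd_dist_eq {V₁ V₂ : Type*} {G : SimpleGraph V₁} {H : SimpleGraph V₂}
    (hG : G.Connected) (hH : H.Connected) (p q : V₁ × V₂) :
    (G.boxProd H).dist p q = G.dist p.1 q.1 + H.dist p.2 q.2 := by
  apply le_antisymm
  · obtain ⟨w₁, hw₁⟩ := hG.exists_walk_length_eq_dist p.1 q.1
    obtain ⟨w₂, hw₂⟩ := hH.exists_walk_length_eq_dist p.2 q.2
    have := SimpleGraph.dist_le ((w₁.boxProdLeft H p.2).append (w₂.boxProdRight G q.1))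
    refine this.trans (le_of_eq ?_)
    rw [SimpleGraph.Walk.length_append]
    exact congrArg₂ (· + ·) ((SimpleGraph.Walk.length_map (p := w₁) _).trans hw₁)
      ((SimpleGraph.Walk.length_map (p := w₂) _).trans hw₂)
  · obtain ⟨w, hw⟩ := (hG.boxProd hH).exists_walk_length_eq_dist p q
    rw [← hw]
    exact boxProd_walk_lower hG hH w

/-- Products of constant-curvature graphs: if `G` has constant curvature `K₁ > 0` and
`H` has constant curvature `K₂ > 0`, then `G □ H` has constant curvature `K` with
`1/K = 1/K₁ + 1/K₂`, i.e. the constant vector with value `K₁K₂/(K₁+K₂)` is a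
curvature vector for `G □ H`. -/
theorem boxProd_constant_curvature {V₁ V₂ : Type*} [Fintype V₁] [Fintype V₂]
    (G : SimpleGraph V₁) (H : SimpleGraph V₂)
    (hG : G.Connected) (hH : H.Connected)
    (K₁ K₂ : ℝ) (hK₁ : 0 < K₁) (hK₂ : 0 < K₂)
    (h₁ : ∀ u : V₁, ∑ v : V₁, (G.dist u v : ℝ) * K₁ = (Fintype.card V₁ : ℝ))
    (h₂ : ∀ u : V₂, ∑ v : V₂, (H.dist u v : ℝ) * K₂ = (Fintype.card V₂ : ℝ)) :
    ∀ p : V₁ × V₂,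
      ∑ q : V₁ × V₂, ((G.boxProd H).dist p q : ℝ) * (K₁ * K₂ / (K₁ + K₂)) =
        (Fintype.card V₁ : ℝ) * (Fintype.card V₂ : ℝ) := by
  intro p
  have hs₁ : ∑ v : V₁, (G.dist p.1 v : ℝ) = (Fintype.card V₁ : ℝ) / K₁ := by
    rw [eq_div_iff hK₁.ne', Finset.sum_mul]
    exact h₁ p.1
  have hs₂ : ∑ v : V₂, (H.dist p.2 v : ℝ) = (Fintype.card V₂ : ℝ) / K₂ := by
    rw [eq_div_iff hK₂.ne', Finset.sum_mul]
    exact h₂ p.2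
  have hsum : ∑ q : V₁ × V₂, ((G.boxProd H).dist p q : ℝ)
      = (Fintype.card V₂ : ℝ) * ((Fintype.card V₁ : ℝ) / K₁)
        + (Fintype.card V₁ : ℝ) * ((Fintype.card V₂ : ℝ) / K₂) := by
    rw [Fintype.sum_prod_type]
    have : ∀ a : V₁, ∑ b : V₂, ((G.boxProd H).dist p (a, b) : ℝ)
        = (Fintype.card V₂ : ℝ) * (G.dist p.1 a : ℝ) + ∑ b : V₂, (H.dist p.2 b : ℝ) := by
      intro a
      calc ∑ b : V₂, ((G.boxProd H).dist p (a, b) : ℝ)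
          = ∑ b : V₂, ((G.dist p.1 a : ℝ) + (H.dist p.2 b : ℝ)) := by
            apply Finset.sum_congr rfl
            intro b _
            rw [boxProd_dist_eq hG hH]
            push_cast
            rfl
        _ = _ := by
            rw [Finset.sum_add_distrib, Finset.sum_const, Finset.card_univ, nsmul_eq_mul]
    rw [Finset.sum_congr rfl (fun a _ => this a), Finset.sum_add_distrib,
      Finset.sum_const, Finset.card_univ, nsmul_eq_mul, ← Finset.mul_sum, hs₁, hs₂]
  rw [← Finset.sum_mul, hsum]
  field_simp
  ring
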